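/- Let C ⊆ ℝⁿ be a nonempty closed convex set, f : ℝⁿ → ℝ convex and differentiable at z with ∇f(z) ≠ 0, and set the Polyak stepsize η = f(z)/‖∇f(z)‖² (assuming f(z) > 0). If z⁺ = proj_C(z − η∇f(z)), then for every x ∈ C with f(x) ≤ 0, f(z)²/‖∇f(z)‖² ≤ ‖x − z‖² − ‖x − z⁺‖². -/

import Mathlib

set_option maxHeartbeats 1000000


open scoped RealInnerProductSpace

/-- Per-step contraction inequality for a projected gradient step with the
Polyak stepsize on a convex constraint function. -/
theorem polyak_step_contraction
    {n : ℕ} (C : Set (EuclideanSpace ℝ (Fin n)))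
    (hCne : C.Nonempty) (hCcl : IsClosed C) (hCcv : Convex ℝ C)
    (f : EuclideanSpace ℝ (Fin n) → ℝ) (hf : ConvexOn ℝ Set.univ f)
    (z g zp : EuclideanSpace ℝ (Fin n)) (hg : HasGradientAt f g z)
    (hgne : g ≠ 0) (hfz : 0 < f z)
    (η : ℝ) (hη : η = f z / ‖g‖ ^ 2)
    (hzp : zp ∈ C ∧ ∀ w ∈ C, dist (z - η • g) zp ≤ dist (z - η • g) w) :
    ∀ x ∈ C, f x ≤ 0 →
      f z ^ 2 / ‖g‖ ^ 2 ≤ ‖x - z‖ ^ 2 - ‖x - zp‖ ^ 2 := by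
  intro x hx hfx
  set u : EuclideanSpace ℝ (Fin n) := z - η • g with hu
  have hgn : (0:ℝ) < ‖g‖ := norm_pos_iff.mpr hgne
  have hG : (0:ℝ) < ‖g‖ ^ 2 := by positivity
  -- projection characterization
  have hproj : ∀ w ∈ C, ⟪u - zp, w - zp⟫ ≤ 0 := by
    have heq : ‖u - zp‖ = ⨅ w : C, ‖u - w‖ := by
      haveI : Nonempty C := ⟨⟨zp, hzp.1⟩⟩
      apply le_antisymm
      · apply le_ciInf
        intro w
        have := hzp.2 w w.2
        simpa [dist_eq_norm] using this
      · have hbdd : BddBelow (Set.range fun w : C => ‖u - (w:EuclideanSpace ℝ (Fin n))‖) := by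
          refine ⟨0, ?_⟩
          rintro r ⟨w, rfl⟩
          exact norm_nonneg _
        exact ciInf_le hbdd ⟨zp, hzp.1⟩
    exact (norm_eq_iInf_iff_real_inner_le_zero hCcv hzp.1).mp heq
  have h1 : ⟪u - zp, x - zp⟫ ≤ 0 := hproj x hx
  -- gradient inequality
  have key : ⟪g, x - z⟫ ≤ f x - f z := by
    set c : ℝ → EuclideanSpace ℝ (Fin n) := fun t => t • (x - z) + z with hc
    have hφ : ConvexOn ℝ Set.univ (f ∘ c) := by
      have h2 := hf.comp_affineMap
        ((LinearMap.toSpanSingleton ℝ _ (x - z)).toAffineMap + AffineMap.const ℝ ℝ z)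
      have hceq : c = ⇑((LinearMap.toSpanSingleton ℝ _ (x - z)).toAffineMap + AffineMap.const ℝ ℝ z) := by
        funext t; simp [hc]
      rw [hceq]; rwa [Set.preimage_univ] at h2
    have hcd : HasDerivAt c (x - z) 0 := by
      simpa [hc] using ((hasDerivAt_id (0:ℝ)).smul_const (x - z)).add_const z
    have hfd : HasDerivAt (f ∘ c) ⟪g, x - z⟫ 0 := by
      have hz0 : c 0 = z := by simp [hc]
      have hF : HasFDerivAt f (InnerProductSpace.toDual ℝ _ g) (c 0) := by
        rw [hz0]; exact hasGradientAt_iff_hasFDerivAt.mp hg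
      simpa [InnerProductSpace.toDual_apply_apply] using hF.comp_hasDerivAt 0 hcd
    have hs := hφ.le_slope_of_hasDerivAt (Set.mem_univ (0:ℝ)) (Set.mem_univ (1:ℝ))
      one_pos hfd
    rw [slope_def_field] at hs
    simpa [hc] using hs
  -- norm expansions
  have h2 : ‖x - zp‖ ^ 2 = ‖x - u‖ ^ 2 + 2 * ⟪x - u, u - zp⟫ + ‖u - zp‖ ^ 2 := by
    have : x - zp = (x - u) + (u - zp) := by abel
    rw [this, norm_add_sq_real]
  have h3 : ⟪u - zp, x - zp⟫ = ⟪x - u, u - zp⟫ + ‖u - zp‖ ^ 2 := by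
    have hxz : x - zp = (x - u) + (u - zp) := by abel
    rw [hxz, inner_add_right, real_inner_self_eq_norm_sq, real_inner_comm]
  have h4 : ‖x - u‖ ^ 2 = ‖x - z‖ ^ 2 + 2 * η * ⟪g, x - z⟫ + η ^ 2 * ‖g‖ ^ 2 := by
    have hxu : x - u = (x - z) + η • g := by simp [hu]; abel
    rw [hxu, norm_add_sq_real, real_inner_smul_right, norm_smul]
    rw [Real.norm_eq_abs, mul_pow, sq_abs, real_inner_comm]
    ring
  have hηG : η * ‖g‖ ^ 2 = f z := by
    rw [hη]; field_simp
  have hηpos : 0 < η := by rw [hη]; positivity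
  -- combine
  rw [div_le_iff₀ hG]
  have hfin : ⟪g, x - z⟫ ≤ -f z := by linarith
  nlinarith [sq_nonneg ‖u - zp‖, mul_le_mul_of_nonneg_left hfin (le_of_lt hηpos),
    sq_nonneg (f z), h2, h3, h1, h4]
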